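/- Let c, β, α, γ be real numbers with c > 0, β > 0, α > −1, and 1 + α + γβ < 0. Then ∫₀^∞ a^α (c + a^β)^γ da = β^{-1} c^{(1+α+γβ)/β} B((1+α)/β, −(1+α+γβ)/β), where B is the Beta function. -/

import Mathlib

open MeasureTheory Set Real

lemma real_beta {u v : ℝ} (hu : 0 < u) (hv : 0 < v) :
    ∫ x in (0:ℝ)..1, x ^ (u - 1) * (1 - x) ^ (v - 1) =
      Real.Gamma u * Real.Gamma v / Real.Gamma (u + v) := by
  have hguv : Real.Gamma (u + v) ≠ 0 := (Real.Gamma_pos_of_pos (by linarith)).ne'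
  have key := Complex.Gamma_mul_Gamma_eq_betaIntegral
    (s := (u:ℂ)) (t := (v:ℂ)) (by simpa using hu) (by simpa using hv)
  have hbeta : Complex.betaIntegral u v =
      ((∫ x in (0:ℝ)..1, x ^ (u - 1) * (1 - x) ^ (v - 1) : ℝ) : ℂ) := by
    rw [Complex.betaIntegral, ← intervalIntegral.integral_ofReal]
    refine intervalIntegral.integral_congr fun x hx => ?_
    rw [uIcc_of_le (by norm_num)] at hx
    push_cast
    rw [Complex.ofReal_cpow hx.1, Complex.ofReal_cpow (by linarith [hx.2] : (0:ℝ) ≤ 1 - x)]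
    push_cast
    ring
  rw [hbeta] at key
  rw [Complex.Gamma_ofReal, Complex.Gamma_ofReal, ← Complex.ofReal_add,
    Complex.Gamma_ofReal] at key
  have key' : Real.Gamma u * Real.Gamma v =
      Real.Gamma (u + v) * ∫ x in (0:ℝ)..1, x ^ (u - 1) * (1 - x) ^ (v - 1) := by
    exact_mod_cast key
  rw [eq_div_iff hguv, key']
  ring

lemma beta_Ioi {u v : ℝ} (hu : 0 < u) (hv : 0 < v) :
    ∫ t in Ioi (0:ℝ), t ^ (u - 1) * (1 + t) ^ (-(u + v)) =
      Real.Gamma u * Real.Gamma v / Real.Gamma (u + v) := by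
  rw [← real_beta hu hv, intervalIntegral.integral_of_le (by norm_num : (0:ℝ) ≤ 1),
    MeasureTheory.integral_Ioc_eq_integral_Ioo]
  have himg : (fun t : ℝ => t / (1 + t)) '' Ioi 0 = Ioo 0 1 := by
    ext x
    constructor
    · rintro ⟨t, ht, rfl⟩
      rw [mem_Ioi] at ht
      have h1 : (0:ℝ) < 1 + t := by linarith
      exact ⟨div_pos ht h1, (div_lt_one h1).2 (by linarith)⟩
    · rintro ⟨hx0, hx1⟩
      refine ⟨x / (1 - x), div_pos hx0 (by linarith), ?_⟩
      have h1 : (1:ℝ) - x ≠ 0 := by linarith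
      field_simp
      ring
  have hderiv : ∀ t ∈ Ioi (0:ℝ), HasDerivWithinAt (fun t : ℝ => t / (1 + t))
      ((1 + t) ^ (-2 : ℝ)) (Ioi 0) t := by
    intro t ht
    rw [mem_Ioi] at ht
    have h1 : (1:ℝ) + t ≠ 0 := by linarith
    have := (hasDerivAt_id t).div ((hasDerivAt_id t).const_add 1) h1
    have e : (1 + t) ^ (-2 : ℝ) = (1 * (1 + t) - t * 1) / (1 + t) ^ 2 := by
      rw [Real.rpow_neg (by linarith), Real.rpow_two, mul_one, one_mul, add_sub_cancel_right,
        one_div]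
    rw [e]
    exact this.hasDerivWithinAt
  have hinj : InjOn (fun t : ℝ => t / (1 + t)) (Ioi 0) := by
    intro a ha b hb hab
    rw [mem_Ioi] at ha hb
    have h1 : (1:ℝ) + a ≠ 0 := by linarith
    have h2 : (1:ℝ) + b ≠ 0 := by linarith
    field_simp at hab
    linarith
  have := integral_image_eq_integral_abs_deriv_smul measurableSet_Ioi hderiv hinj
    (fun x : ℝ => x ^ (u - 1) * (1 - x) ^ (v - 1))
  rw [himg] at this
  rw [this]
  refine setIntegral_congr_fun measurableSet_Ioi fun t ht => ?_
  rw [mem_Ioi] at ht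
  have h1 : (0:ℝ) < 1 + t := by linarith
  have h2 : (1:ℝ) - t / (1 + t) = (1 + t)⁻¹ := by field_simp; ring
  rw [smul_eq_mul, abs_of_pos (rpow_pos_of_pos h1 _)]
  rw [h2, div_rpow ht.le h1.le, Real.inv_rpow h1.le, ← Real.rpow_neg h1.le,
    div_eq_mul_inv, ← Real.rpow_neg h1.le,
    show -(u + v) = -2 + (-(u - 1) + -(v - 1)) by ring,
    Real.rpow_add h1, Real.rpow_add h1]
  ring

theorem stmt3 (c β α γ : ℝ) (hc : 0 < c) (hβ : 0 < β) (hα : -1 < α)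
    (h : 1 + α + γ * β < 0) :
    ∫ a in Set.Ioi (0 : ℝ), a ^ α * (c + a ^ β) ^ γ =
      β⁻¹ * c ^ ((1 + α + γ * β) / β) *
        (Real.Gamma ((1 + α) / β) * Real.Gamma (-(1 + α + γ * β) / β) /
          Real.Gamma ((1 + α) / β + -(1 + α + γ * β) / β)) := by
  have hβ' : β ≠ 0 := hβ.ne'
  set u := (1 + α) / β with hu_def
  set v := -(1 + α + γ * β) / β with hv_def
  have hu : 0 < u := div_pos (by linarith) hβ
  have hv : 0 < v := div_pos (by linarith) hβ
  have hγ : γ = -(u + v) := by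
    rw [hu_def, hv_def]
    field_simp
    ring
  have hcv : (1 + α + γ * β) / β = -v := by
    rw [hv_def]; ring
  set B := Real.Gamma u * Real.Gamma v / Real.Gamma (u + v) with hB
  set g : ℝ → ℝ := fun y => β⁻¹ * (y ^ (u - 1) * (c + y) ^ γ) with hg
  have step1 : ∫ a in Set.Ioi (0:ℝ), a ^ α * (c + a ^ β) ^ γ
      = ∫ x in Set.Ioi (0:ℝ), (β * x ^ (β - 1)) • g (x ^ β) := by
    refine (setIntegral_congr_fun measurableSet_Ioi fun x hx => ?_)
    rw [Set.mem_Ioi] at hx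
    rw [hg, smul_eq_mul]
    dsimp only
    rw [← Real.rpow_mul hx.le, show β * (u - 1) = α + 1 - β by
      rw [hu_def]; field_simp; ring]
    have hx1 : x ^ (β - 1) * x ^ (α + 1 - β) = x ^ α := by
      rw [← Real.rpow_add hx, show β - 1 + (α + 1 - β) = α by ring]
    rw [← hx1]
    field_simp
  rw [step1, integral_comp_rpow_Ioi_of_pos hβ, hg]
  rw [MeasureTheory.integral_const_mul]
  have hsub := integral_comp_mul_left_Ioi (fun y => y ^ (u - 1) * (c + y) ^ γ) 0 hc
  rw [mul_zero] at hsub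
  have congr1 : (∫ x in Set.Ioi (0:ℝ), (fun y => y ^ (u - 1) * (c + y) ^ γ) (c * x))
      = ∫ x in Set.Ioi (0:ℝ), (c ^ (u - 1) * c ^ γ) * (x ^ (u - 1) * (1 + x) ^ (-(u + v))) := by
    refine (setIntegral_congr_fun measurableSet_Ioi fun x hx => ?_)
    rw [Set.mem_Ioi] at hx
    dsimp only
    rw [Real.mul_rpow hc.le hx.le, show c + c * x = c * (1 + x) by ring,
      Real.mul_rpow hc.le (by linarith), ← hγ]
    ring
  rw [congr1, MeasureTheory.integral_const_mul, beta_Ioi hu hv, ← hB, smul_eq_mul] at hsub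
  beta_reduce at hsub
  have hint : ∫ y in Set.Ioi (0:ℝ), y ^ (u - 1) * (c + y) ^ γ
      = c * (c ^ (u - 1) * c ^ γ * B) := by
    rw [hsub, ← mul_assoc, mul_inv_cancel₀ hc.ne', one_mul]
  rw [hint, hcv]
  have hcpow : c * (c ^ (u - 1) * c ^ γ) = c ^ (-v) := by
    rw [show -v = 1 + (u - 1 + γ) by rw [hγ]; ring, Real.rpow_add hc, Real.rpow_add hc,
      Real.rpow_one]
  rw [← mul_assoc (β⁻¹), ← hcpow]
  ring
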